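/- Let R be a commutative ring and let F ∈ R[[X,Y]] satisfy F(X,0) = X and F(0,Y) = Y (substituting 0 for one variable). Then there exists a unique power series i ∈ R[[T]] with zero constant term such that F(T, i(T)) = 0. (Existence and uniqueness of the formal inverse i_G for a formal group law G, property G₃.) -/

import Mathlib

/-- Substitution of two power series `u`, `v` (intended to have zero constant
coefficient) into a two-variable power series `F ∈ R[[X,Y]]`, i.e.
`F(u,v) = ∑_{i,j} (coeff_{(i,j)} F) · uⁱ · vʲ`.  Each coefficient of the result is
given by the finite truncated sum, which agrees with the genuine substitution whenever
`u` and `v` have zero constant coefficient. -/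
noncomputable def MvPowerSeries.subst2 {τ R : Type*} [CommRing R]
    (u v : MvPowerSeries τ R) (F : MvPowerSeries (Fin 2) R) : MvPowerSeries τ R :=
  fun d =>
    ∑ ij ∈ Finset.range (d.sum (fun _ e => e) + 1) ×ˢ
        Finset.range (d.sum (fun _ e => e) + 1),
      MvPowerSeries.coeff (Finsupp.single 0 ij.1 + Finsupp.single 1 ij.2) F *
        MvPowerSeries.coeff d (u ^ ij.1 * v ^ ij.2)

section aux
variable {R : Type*} [CommRing R]

lemma coeff_subst2_ps (u v : PowerSeries R) (F : MvPowerSeries (Fin 2) R) (n : ℕ) :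
    PowerSeries.coeff n (MvPowerSeries.subst2 u v F) =
      ∑ ij ∈ Finset.range (n + 1) ×ˢ Finset.range (n + 1),
        MvPowerSeries.coeff (Finsupp.single 0 ij.1 + Finsupp.single 1 ij.2) F *
          PowerSeries.coeff n (u ^ ij.1 * v ^ ij.2) := by
  have : PowerSeries.coeff n (MvPowerSeries.subst2 u v F)
      = MvPowerSeries.subst2 u v F (Finsupp.single () n) := rfl
  rw [this]
  simp only [MvPowerSeries.subst2, Finsupp.sum_single_index]
  rfl

lemma coeff_pow_eq_zero (g : PowerSeries R) (hg : PowerSeries.constantCoeff g = 0)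
    {p j : ℕ} (h : p < j) : PowerSeries.coeff p (g ^ j) = 0 := by
  have hx : (PowerSeries.X : PowerSeries R) ∣ g := PowerSeries.X_dvd_iff.mpr hg
  exact PowerSeries.X_pow_dvd_iff.mp (pow_dvd_pow_of_dvd hx j) p h

lemma coeff_pow_congr {g g' : PowerSeries R} {n : ℕ}
    (hg : PowerSeries.constantCoeff g = 0) (hg' : PowerSeries.constantCoeff g' = 0)
    (hag : ∀ k < n, PowerSeries.coeff k g = PowerSeries.coeff k g') :
    ∀ j m, m + 1 < n + j → PowerSeries.coeff m (g ^ j) = PowerSeries.coeff m (g' ^ j) := by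
  intro j
  induction j with
  | zero => intro m _; rfl
  | succ j ih =>
    intro m hm
    rw [pow_succ, pow_succ, PowerSeries.coeff_mul, PowerSeries.coeff_mul]
    apply Finset.sum_congr rfl
    intro pq hpq
    rw [Finset.HasAntidiagonal.mem_antidiagonal] at hpq
    rcases Nat.eq_zero_or_pos pq.2 with h2 | h2
    · rw [h2]
      simp [PowerSeries.coeff_zero_eq_constantCoeff, hg, hg']
    rcases lt_or_ge pq.2 n with h3 | h3
    · rw [hag pq.2 h3, ih pq.1 (by omega)]
    · rw [coeff_pow_eq_zero g hg (show pq.1 < j by omega),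
        coeff_pow_eq_zero g' hg' (show pq.1 < j by omega)]
      simp

lemma coeff_subst2_sub {g g' : PowerSeries R} {n : ℕ} (F : MvPowerSeries (Fin 2) R)
    (hg : PowerSeries.constantCoeff g = 0) (hg' : PowerSeries.constantCoeff g' = 0)
    (hag : ∀ k < n, PowerSeries.coeff k g = PowerSeries.coeff k g') :
    PowerSeries.coeff n (MvPowerSeries.subst2 PowerSeries.X g F) -
      PowerSeries.coeff n (MvPowerSeries.subst2 PowerSeries.X g' F) =
      MvPowerSeries.coeff (Finsupp.single 1 1) F *
        (PowerSeries.coeff n g - PowerSeries.coeff n g') := by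
  rcases Nat.eq_zero_or_pos n with rfl | hn
  · rw [coeff_subst2_ps, coeff_subst2_ps]
    simp [PowerSeries.coeff_zero_eq_constantCoeff, hg, hg']
  rw [coeff_subst2_ps, coeff_subst2_ps, ← Finset.sum_sub_distrib]
  rw [Finset.sum_eq_single_of_mem ((0 : ℕ), (1 : ℕ))
      (by simp [Finset.mem_product]; omega)]
  · simp only [pow_zero, pow_one, one_mul, Finsupp.single_zero, zero_add]
    ring
  · rintro ⟨i, j⟩ hij hne
    simp only [Finset.mem_product, Finset.mem_range] at hij
    have : PowerSeries.coeff n (PowerSeries.X ^ i * g ^ j)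
        = PowerSeries.coeff n (PowerSeries.X ^ i * g' ^ j) := by
      rcases Nat.eq_zero_or_pos j with rfl | hj
      · rfl
      have hi : i ≤ n := by omega
      obtain ⟨m, rfl⟩ := Nat.exists_eq_add_of_le hi
      rw [add_comm i m, PowerSeries.coeff_X_pow_mul, PowerSeries.coeff_X_pow_mul]
      apply coeff_pow_congr hg hg' hag
      have : i ≠ 0 ∨ j ≠ 1 := by
        by_contra h
        push_neg at h
        exact hne (by simp [h.1, h.2])
      omega
    rw [this]
    ring

/-- coefficients of the formal inverse, by strong recursion -/
noncomputable def invC (F : MvPowerSeries (Fin 2) R) : ℕ → R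
  | 0 => 0
  | n + 1 => - PowerSeries.coeff (n + 1) (MvPowerSeries.subst2 PowerSeries.X
      (PowerSeries.mk fun k => if h : k < n + 1 then invC F k else 0) F)
  decreasing_by exact h

end aux

/-- Let `F ∈ R[[X,Y]]` satisfy the unit axioms `F(X,0) = X` and `F(0,Y) = Y` of a
formal group law.  Then there exists a unique power series `i ∈ R[[T]]` with zero
constant term such that `F(T, i(T)) = 0`: existence and uniqueness of the formal
inverse `i_G` (property `G₃`). -/

theorem existsUnique_formal_inverse {R : Type*} [CommRing R]
    (F : MvPowerSeries (Fin 2) R)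
    (h1 : MvPowerSeries.subst2 (MvPowerSeries.X 0 : MvPowerSeries (Fin 2) R) 0 F
        = MvPowerSeries.X 0)
    (h2 : MvPowerSeries.subst2 0 (MvPowerSeries.X 1 : MvPowerSeries (Fin 2) R) F
        = MvPowerSeries.X 1) :
    ∃! i : PowerSeries R, PowerSeries.constantCoeff i = 0 ∧
      MvPowerSeries.subst2 (PowerSeries.X : PowerSeries R) i F = 0 := by
  -- coefficient facts about F
  have hF00 : MvPowerSeries.coeff (0 : Fin 2 →₀ ℕ) F = 0 := by
    have h := congrArg (MvPowerSeries.coeff (0 : Fin 2 →₀ ℕ)) h1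
    rw [MvPowerSeries.coeff_apply] at h
    simp only [MvPowerSeries.subst2, Finsupp.sum_zero_index, zero_add,
      Finset.range_one] at h
    simpa [MvPowerSeries.coeff_zero_eq_constantCoeff] using h
  have hF01 : MvPowerSeries.coeff (Finsupp.single (1 : Fin 2) 1) F = 1 := by
    have h := congrArg (MvPowerSeries.coeff (Finsupp.single (1 : Fin 2) 1)) h2
    rw [MvPowerSeries.coeff_apply] at h
    simp only [MvPowerSeries.subst2, Finsupp.sum_single_index] at h
    rw [Finset.sum_product] at h
    simp only [Finset.sum_range_succ, Finset.sum_range_zero] at h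
    simpa [MvPowerSeries.coeff_X, MvPowerSeries.coeff_one, Finsupp.single_eq_zero] using h
  set ι : PowerSeries R := PowerSeries.mk (invC F) with hι
  have hι0 : PowerSeries.constantCoeff ι = 0 := by
    rw [← PowerSeries.coeff_zero_eq_constantCoeff_apply, hι, PowerSeries.coeff_mk, invC]
  have htrunc0 : ∀ n : ℕ, PowerSeries.constantCoeff
      (PowerSeries.mk fun k => if _ : k < n then invC F k else 0) = 0 := by
    intro n
    rw [← PowerSeries.coeff_zero_eq_constantCoeff_apply, PowerSeries.coeff_mk]
    rcases n with _ | n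
    · simp
    · simp [invC]
  have hsol : MvPowerSeries.subst2 (PowerSeries.X : PowerSeries R) ι F = 0 := by
    apply PowerSeries.ext
    intro n
    rw [map_zero]
    rcases n with _ | n
    · rw [coeff_subst2_ps]
      simpa [PowerSeries.coeff_zero_eq_constantCoeff] using hF00
    · set t : PowerSeries R :=
        PowerSeries.mk (fun k => if _ : k < n + 1 then invC F k else 0) with ht
      have hagree : ∀ k < n + 1, PowerSeries.coeff k ι = PowerSeries.coeff k t := by
        intro k hk
        rw [hι, ht, PowerSeries.coeff_mk, PowerSeries.coeff_mk, dif_pos hk]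
      have hsub := coeff_subst2_sub F hι0 (htrunc0 (n + 1)) hagree
      have h1 : PowerSeries.coeff (n + 1) t = 0 := by
        rw [ht, PowerSeries.coeff_mk, dif_neg (lt_irrefl (n + 1))]
      have h2 : PowerSeries.coeff (n + 1) ι =
          - PowerSeries.coeff (n + 1) (MvPowerSeries.subst2 PowerSeries.X t F) := by
        rw [hι, PowerSeries.coeff_mk]
        conv_lhs => rw [invC]
      rw [← ht, hF01, h1, h2] at hsub
      linear_combination hsub
  refine ⟨ι, ⟨hι0, hsol⟩, ?_⟩
  rintro y ⟨hy0, hys⟩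
  apply PowerSeries.ext
  intro n
  induction n using Nat.strong_induction_on with
  | _ n ih =>
    have hsub := coeff_subst2_sub F hy0 hι0 ih
    rw [hys, hsol, hF01, map_zero, sub_self, one_mul] at hsub
    linear_combination -hsub
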